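/- Let α ≥ 0, a, b > 0, let f ∈ PW_α(ab), and let g be the entire function with f(x) = g(x²) for x ≥ 0. Suppose x ≥ 1 is good, i.e. for every integer k ≥ 1 one has ∫_{I_x} |g^{(k)}(s)|² s^{α+k} ds < (2πab)^{2k} ∫_{I_x} |g(s)|² s^α ds, where I_x = [(x−1)², (x+1)²]. Then there exists t_x ∈ I_x such that for every integer k ≥ 0: t_x^{α+k} |g^{(k)}(t_x)|² ≤ (12 π² a² b²)^k ∫_{I_x} |g(s)|² s^α ds. -/

import Mathlib

open MeasureTheory Real Set

/-- The measure `dμ_α(x) = (2π^{α+1}/Γ(α+1)) x^{2α+1} dx` on `ℝ⁺ = [0,∞)`. -/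
noncomputable def muB (α : ℝ) : Measure ℝ :=
  (volume.restrict (Set.Ici (0:ℝ))).withDensity
    (fun x => ENNReal.ofReal (2 * π ^ (α+1) / Gamma (α+1) * x ^ (2*α+1)))

/-- The normalized Bessel function `j_α`. -/
noncomputable def besselJ (α : ℝ) (x : ℝ) : ℝ :=
  Gamma (α+1) * ∑' n : ℕ,
    ((-1:ℝ)^n / ((n.factorial : ℝ) * Gamma ((n:ℝ) + α + 1))) * (x/2)^(2*n)

/-- The Paley-Wiener space `PW_α(b)`. -/
def PW (α b : ℝ) (f : ℝ → ℂ) : Prop :=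
  MemLp f 2 (muB α) ∧ ∃ g : ℝ → ℂ, MemLp g 2 (muB α) ∧
    (∀ y, y ∉ Set.Icc 0 b → g y = 0) ∧
    ∀ x ≥ (0:ℝ), f x = ∫ y in Set.Icc 0 b, g y * (besselJ α (2*π*x*y) : ℂ) ∂(muB α)

/-- On a good interval `I_x` there is a point `t_x` at which all derivatives of
`g` are controlled by the weighted `L²`-norm of `g` on `I_x`. -/
theorem good_interval_point_estimate
    {α a b : ℝ} (hα : 0 ≤ α) (ha : 0 < a) (hb : 0 < b)
    {f : ℝ → ℂ} (hf : PW α (a*b) f) {g : ℂ → ℂ} (hg : Differentiable ℂ g)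
    (hfg : ∀ x : ℝ, 0 ≤ x → f x = g (((x:ℝ):ℂ)^2))
    (x : ℝ) (hx : 1 ≤ x)
    (hgood : ∀ k : ℕ, 1 ≤ k →
      (∫ s in Set.Icc ((x-1)^2) ((x+1)^2),
          ‖iteratedDeriv k g ((s:ℝ):ℂ)‖^2 * s ^ (α + (k:ℝ))) <
        (2*π*a*b)^(2*k) *
          ∫ s in Set.Icc ((x-1)^2) ((x+1)^2), ‖g ((s:ℝ):ℂ)‖^2 * s ^ α) :
    ∃ t ∈ Set.Icc ((x-1)^2) ((x+1)^2), ∀ k : ℕ,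
      t ^ (α + (k:ℝ)) * ‖iteratedDeriv k g ((t:ℝ):ℂ)‖^2 ≤
        (12*π^2*a^2*b^2)^k *
          ∫ s in Set.Icc ((x-1)^2) ((x+1)^2), ‖g ((s:ℝ):ℂ)‖^2 * s ^ α := by
  set I : Set ℝ := Set.Icc ((x-1)^2) ((x+1)^2) with hI
  set M : ℝ := ∫ s in I, ‖g ((s:ℝ):ℂ)‖^2 * s ^ α with hM
  have hImeas : MeasurableSet I := measurableSet_Icc
  have hInonneg : ∀ s ∈ I, (0:ℝ) ≤ s := fun s hs => le_trans (sq_nonneg _) hs.1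
  set w : ℕ → ℝ → ℝ := fun k s => ‖iteratedDeriv k g ((s:ℝ):ℂ)‖^2 * s ^ (α + (k:ℝ)) with hw
  have hwcont : ∀ k, Continuous (w k) := by
    intro k
    apply Continuous.mul
    · exact (((hg.contDiff (n := (⊤:WithTop ℕ∞))).continuous_iteratedDeriv k le_top).comp
        Complex.continuous_ofReal).norm.pow 2
    · refine continuous_iff_continuousAt.2 fun s => ?_
      exact Real.continuousAt_rpow_const s _ (Or.inr (by positivity))
  have hwnonneg : ∀ k, ∀ s ∈ I, 0 ≤ w k s := by
    intro k s hs
    exact mul_nonneg (by positivity) (Real.rpow_nonneg (hInonneg s hs) _)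
  have hwint : ∀ k, IntegrableOn (w k) I := fun k => (hwcont k).integrableOn_Icc
  -- hgood restated
  have hGk : ∀ k : ℕ, 1 ≤ k → (∫ s in I, w k s) < ((2*π*a*b)^2)^k * M := by
    intro k hk
    have := hgood k hk
    rw [pow_mul] at this
    exact this
  have hG0 : (∫ s in I, w 0 s) = M := by
    rw [hM]
    refine setIntegral_congr_fun hImeas fun s _ => ?_
    simp [hw, iteratedDeriv_zero]
  -- M is positive
  have hM0 : 0 < M := by
    by_contra hcon
    push_neg at hcon
    have h1 := hGk 1 le_rfl
    have h2 : 0 ≤ ∫ s in I, w 1 s := setIntegral_nonneg hImeas (hwnonneg 1)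
    have hpos : (0:ℝ) < ((2*π*a*b)^2)^1 := by positivity
    nlinarith
  -- bad sets
  set B : ℕ → Set ℝ := fun k =>
    I ∩ {t : ℝ | (12*π^2*a^2*b^2)^k * M < t ^ (α + (k:ℝ)) * ‖iteratedDeriv k g ((t:ℝ):ℂ)‖^2}
    with hB
  have hBsub : ∀ k, B k ⊆ I := fun k => Set.inter_subset_left
  have hBmeas : ∀ k, MeasurableSet (B k) := by
    intro k
    apply hImeas.inter
    have : Continuous fun t : ℝ => t ^ (α + (k:ℝ)) * ‖iteratedDeriv k g ((t:ℝ):ℂ)‖^2 := by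
      have := hwcont k
      simp only [hw] at this
      simpa [mul_comm] using this
    exact (isOpen_lt continuous_const this).measurableSet
  have hIfin : volume I ≠ ⊤ := by
    rw [hI, Real.volume_Icc]; exact ENNReal.ofReal_ne_top
  have hBfin : ∀ k, volume (B k) ≠ ⊤ := fun k =>
    ((measure_mono (hBsub k)).trans_lt (lt_top_iff_ne_top.mpr hIfin)).ne
  -- Chebyshev bound
  have cheb : ∀ k : ℕ, volume (B k) ≤ ENNReal.ofReal ((1/3:ℝ)^k) := by
    intro k
    have hconst : ∀ t ∈ B k, (12*π^2*a^2*b^2)^k * M ≤ w k t := by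
      intro t ht
      have := ht.2
      simp only [Set.mem_setOf_eq] at this
      rw [hw]
      simpa [mul_comm] using this.le
    have h1 : (12*π^2*a^2*b^2)^k * M * (volume (B k)).toReal ≤ ∫ t in B k, w k t :=
      setIntegral_ge_of_const_le_real (hBmeas k) (hBfin k) hconst ((hwint k).mono_set (hBsub k))
    have h2 : (∫ t in B k, w k t) ≤ ∫ t in I, w k t := by
      refine setIntegral_mono_set (hwint k) ?_ (HasSubset.Subset.eventuallyLE (hBsub k))
      filter_upwards [ae_restrict_mem hImeas] with s hs using hwnonneg k s hs
    have h3 : (∫ t in I, w k t) ≤ ((2*π*a*b)^2)^k * M := by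
      rcases Nat.eq_zero_or_pos k with hk | hk
      · subst hk; simp [hG0]
      · exact (hGk k hk).le
    have hCk : (12*π^2*a^2*b^2:ℝ)^k = 3^k * ((2*π*a*b)^2)^k := by
      rw [← mul_pow]; congr 1; ring
    have hX : (0:ℝ) < ((2*π*a*b)^2)^k * M := by positivity
    have hv0 : (0:ℝ) ≤ (volume (B k)).toReal := ENNReal.toReal_nonneg
    have h4 : (3:ℝ)^k * (volume (B k)).toReal ≤ 1 := by
      by_contra hcon
      push_neg at hcon
      have h5 : ((2*π*a*b)^2)^k * M * 1 < ((2*π*a*b)^2)^k * M * ((3:ℝ)^k * (volume (B k)).toReal) :=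
        (mul_lt_mul_iff_right₀ hX).mpr hcon
      rw [hCk] at h1
      nlinarith
    rw [ENNReal.le_ofReal_iff_toReal_le (hBfin k) (by positivity)]
    have h6 : ((1/3:ℝ))^k = ((3:ℝ)^k)⁻¹ := by rw [one_div, inv_pow]
    have h7 : (0:ℝ) < 3^k := by positivity
    rw [h6, ← one_div, le_div_iff₀ h7]
    rw [mul_comm] at h4
    exact h4
  -- the union of bad sets does not cover I
  have hunion : volume (⋃ k, B k) < volume I := by
    have h1 : volume (⋃ k, B k) ≤ ∑' k, volume (B k) := measure_iUnion_le _
    have h2 : ∑' k : ℕ, volume (B k) ≤ ∑' k : ℕ, ENNReal.ofReal ((1/3:ℝ)^k) :=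
      ENNReal.tsum_le_tsum cheb
    have h3 : ∑' k : ℕ, ENNReal.ofReal ((1/3:ℝ)^k) = ENNReal.ofReal (3/2) := by
      rw [← ENNReal.ofReal_tsum_of_nonneg (fun k => by positivity)
        (summable_geometric_of_lt_one (by norm_num) (by norm_num)),
        tsum_geometric_of_lt_one (by norm_num) (by norm_num)]
      norm_num
    have h4 : volume I = ENNReal.ofReal (4*x) := by
      rw [hI, Real.volume_Icc]; congr 1; ring
    rw [h4]
    calc volume (⋃ k, B k) ≤ ENNReal.ofReal (3/2) := le_trans h1 (h2.trans_eq h3)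
      _ < ENNReal.ofReal (4*x) := (ENNReal.ofReal_lt_ofReal_iff (by linarith)).mpr (by linarith)
  have hns : ¬ I ⊆ ⋃ k, B k := fun h => absurd (measure_mono h) (not_le.mpr hunion)
  obtain ⟨t, htI, htB⟩ := Set.not_subset.mp hns
  refine ⟨t, htI, fun k => ?_⟩
  have hnot : t ∉ B k := fun h => htB (Set.mem_iUnion.mpr ⟨k, h⟩)
  rw [hB] at hnot
  simp only [Set.mem_inter_iff, Set.mem_setOf_eq, not_and, not_lt] at hnot
  exact hnot htI
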